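/- Let E and G be Banach function spaces, S : E → G a bounded linear operator dominated by a positive operator R ∈ L(E,G), and X a Banach space. Then the tensor extension S ⊗ I_X : E ⊗ X → G ⊗ X (determined by (S ⊗ I_X)(f ⊗ x) = Sf ⊗ x) extends uniquely to a bounded linear operator S_X from the closure of E ⊗ X in the Köthe–Bochner space E(X) to the closure of G ⊗ X in G(X), with ‖S_X‖ ≤ ‖R‖. -/

import Mathlib

open MeasureTheory

/-- A (model of a) Banach function space on a measure space: a Banach lattice `E`
together with an injective lattice-respecting linear embedding `ι` into `L⁰(μ)`
whose range is an order ideal. -/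
structure IsBanachFunctionSpace {α : Type*} [MeasurableSpace α] (μ : Measure α)
    (E : Type*) [NormedAddCommGroup E] [Lattice E] [HasSolidNorm E] [IsOrderedAddMonoid E] [NormedSpace ℝ E] [CompleteSpace E]
    (ι : E →ₗ[ℝ] (α →ₘ[μ] ℝ)) : Prop where
  inj : Function.Injective ι
  map_abs : ∀ e : E, ⇑(ι |e|) =ᵐ[μ] fun a => |(ι e) a|
  ideal : ∀ (f : α →ₘ[μ] ℝ) (e : E), (∀ᵐ a ∂μ, |f a| ≤ |(ι e) a|) → ∃ e' : E, ι e' = f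

section KB

variable {α E : Type*} [MeasurableSpace α] {μ : Measure α}
  [NormedAddCommGroup E] [Lattice E] [HasSolidNorm E] [IsOrderedAddMonoid E] [NormedSpace ℝ E]
  {X : Type*} [NormedAddCommGroup X] [NormedSpace ℝ X]

/-- `f` is a member of the Köthe–Bochner space `E(X)`, with `e ∈ E` representing its
pointwise norm function `a ↦ ‖f a‖`. -/
def MemKB (ι : E →ₗ[ℝ] (α →ₘ[μ] ℝ)) (f : α → X) (e : E) : Prop :=
  AEStronglyMeasurable f μ ∧ (fun a => ‖f a‖) =ᵐ[μ] ⇑(ι e)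

/-- `f` belongs to the closure of `E ⊗ X` in the Köthe–Bochner space `E(X)`:
it can be approximated in the `E(X)`-norm by finite sums of elementary tensors. -/
def InTensorClosure (ι : E →ₗ[ℝ] (α →ₘ[μ] ℝ)) (f : α → X) : Prop :=
  AEStronglyMeasurable f μ ∧
  ∀ ε > (0 : ℝ), ∃ (n : ℕ) (u : Fin n → E) (x : Fin n → X) (e : E),
    ((fun a => ‖f a - ∑ j : Fin n, (ι (u j)) a • x j‖) =ᵐ[μ] ⇑(ι e)) ∧ ‖e‖ < ε

end KB

open Filter

section Basic
variable {α E : Type*} [MeasurableSpace α] {μ : Measure α}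
  [NormedAddCommGroup E] [Lattice E] [HasSolidNorm E] [IsOrderedAddMonoid E] [NormedSpace ℝ E] [CompleteSpace E]
  {ι : E →ₗ[ℝ] (α →ₘ[μ] ℝ)}

theorem coeFn_fsum {k : Type*} (s : Finset k) (F : k → (α →ₘ[μ] ℝ)) :
    ⇑(∑ j ∈ s, F j) =ᵐ[μ] fun a => ∑ j ∈ s, (F j) a := by
  classical
  induction s using Finset.induction_on with
  | empty => simp only [Finset.sum_empty]; exact AEEqFun.coeFn_zero (β := ℝ) (μ := μ)
  | insert j s hj ih =>
    rw [Finset.sum_insert hj]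
    filter_upwards [AEEqFun.coeFn_add (F j) (∑ i ∈ s, F i), ih] with a h1 h2
    simp only [Pi.add_apply] at h1
    simp [h1, h2, Finset.sum_insert hj]

theorem bfs_le_of_ae (hE : IsBanachFunctionSpace μ E ι) {e₁ e₂ : E}
    (h : ∀ᵐ a ∂μ, (ι e₁) a ≤ (ι e₂) a) : e₁ ≤ e₂ := by
  have h0 : ∀ᵐ a ∂μ, (ι (e₂ - e₁)) a = |(ι (e₂ - e₁)) a| := by
    have hsub : ι (e₂ - e₁) = ι e₂ - ι e₁ := by rw [map_sub]
    filter_upwards [h, hsub ▸ AEEqFun.coeFn_sub (ι e₂) (ι e₁)] with a ha hb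
    rw [hb]; simp only [Pi.sub_apply]
    exact (abs_of_nonneg (by linarith)).symm
  have heq : ι |e₂ - e₁| = ι (e₂ - e₁) := by
    apply AEEqFun.ext
    filter_upwards [hE.map_abs (e₂ - e₁), h0] with a h1 h2
    rw [h1, ← h2]
  have h2 := hE.inj heq
  exact sub_nonneg.mp (h2 ▸ abs_nonneg (e₂ - e₁))

theorem bfs_ae_of_le (hE : IsBanachFunctionSpace μ E ι) {e₁ e₂ : E}
    (h : e₁ ≤ e₂) : ∀ᵐ a ∂μ, (ι e₁) a ≤ (ι e₂) a := by
  have h2 : |e₂ - e₁| = e₂ - e₁ := abs_of_nonneg (sub_nonneg.mpr h)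
  have hsub : ι (e₂ - e₁) = ι e₂ - ι e₁ := by rw [map_sub]
  filter_upwards [hE.map_abs (e₂ - e₁), hsub ▸ AEEqFun.coeFn_sub (ι e₂) (ι e₁)]
    with a h1 hb
  rw [h2] at h1
  simp only [Pi.sub_apply] at hb
  linarith [abs_nonneg ((ι (e₂ - e₁)) a), hb]

theorem bfs_nonneg_of_ae (hE : IsBanachFunctionSpace μ E ι) {e : E}
    (h : ∀ᵐ a ∂μ, 0 ≤ (ι e) a) : 0 ≤ e := by
  apply bfs_le_of_ae hE
  filter_upwards [h, (map_zero ι ▸ AEEqFun.coeFn_zero (β := ℝ) (μ := μ) :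
    ⇑(ι 0) =ᵐ[μ] fun _ => 0)] with a h1 h2
  rw [h2]; exact h1

theorem bfs_ae_nonneg (hE : IsBanachFunctionSpace μ E ι) {e : E}
    (h : 0 ≤ e) : ∀ᵐ a ∂μ, 0 ≤ (ι e) a := by
  filter_upwards [bfs_ae_of_le hE h, (map_zero ι ▸ AEEqFun.coeFn_zero (β := ℝ) (μ := μ) :
    ⇑(ι 0) =ᵐ[μ] fun _ => 0)] with a h1 h2
  rw [h2] at h1; exact h1

/-- abs-bound transfer: if a.e. |ι e₁| ≤ ι e₂ then |e₁| ≤ e₂ -/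
theorem bfs_abs_le_of_ae (hE : IsBanachFunctionSpace μ E ι) {e₁ e₂ : E}
    (h : ∀ᵐ a ∂μ, |(ι e₁) a| ≤ (ι e₂) a) : |e₁| ≤ e₂ := by
  apply bfs_le_of_ae hE
  filter_upwards [h, hE.map_abs e₁] with a h1 h2
  rw [h2]; exact h1

theorem bfs_ae_abs_le (hE : IsBanachFunctionSpace μ E ι) {e₁ e₂ : E}
    (h : |e₁| ≤ e₂) : ∀ᵐ a ∂μ, |(ι e₁) a| ≤ (ι e₂) a := by
  filter_upwards [bfs_ae_of_le hE h, hE.map_abs e₁] with a h1 h2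
  rw [← h2]; exact h1

/-- norm comparison from order, for 0 ≤ e₁ ≤ e₂. -/
theorem bfs_norm_le {e₁ e₂ : E} (h1 : |e₁| ≤ e₂) : ‖e₁‖ ≤ ‖e₂‖ :=
  HasSolidNorm.solid (h1.trans (le_abs_self _))

/-- ideal + domination: exact representative -/
theorem bfs_rep (hE : IsBanachFunctionSpace μ E ι) {ψ : α → ℝ}
    (hψ : AEStronglyMeasurable ψ μ) {e : E}
    (h : ∀ᵐ a ∂μ, |ψ a| ≤ (ι e) a) :
    ∃ e' : E, (ψ =ᵐ[μ] ⇑(ι e')) ∧ |e'| ≤ e := by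
  obtain ⟨e', he'⟩ := hE.ideal (AEEqFun.mk ψ hψ) e (by
    filter_upwards [h, AEEqFun.coeFn_mk ψ hψ] with a h1 h2
    rw [h2]; exact h1.trans (le_abs_self _))
  have hc : ⇑(ι e') =ᵐ[μ] ψ := he' ▸ AEEqFun.coeFn_mk ψ hψ
  refine ⟨e', hc.symm, bfs_abs_le_of_ae hE ?_⟩
  filter_upwards [hc, h] with a h1 h2
  rw [h1]; exact h2
end Basic

section Norming
variable {X : Type*} [NormedAddCommGroup X] [NormedSpace ℝ X]

theorem norming {k : Type*} [Fintype k] (x : k → X) :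
    ∃ φ : (k → ℚ) → (X →L[ℝ] ℝ), (∀ q, ‖φ q‖ ≤ 1) ∧
      ∀ (t : k → ℝ) (ε : ℝ), 0 < ε →
        ∃ q, ‖∑ j, t j • x j‖ ≤ (φ q) (∑ j, t j • x j) + ε := by
  have hex : ∀ q : k → ℚ, ∃ g : X →L[ℝ] ℝ, ‖g‖ ≤ 1 ∧ g (∑ j, (q j : ℝ) • x j) =
      ‖∑ j, (q j : ℝ) • x j‖ := by
    intro q
    obtain ⟨g, hg1, hg2⟩ := exists_dual_vector'' ℝ (∑ j, (q j : ℝ) • x j)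
    exact ⟨g, hg1, by exact_mod_cast hg2⟩
  choose φ hφ1 hφ2 using hex
  refine ⟨φ, hφ1, ?_⟩
  intro t ε hε
  set M : ℝ := (∑ j, ‖x j‖) + 1 with hM
  have hM0 : 0 < M := by positivity
  have hδ : 0 < ε / (2 * M) := by positivity
  choose q hq using fun j => exists_rat_near (t j) hδ
  set v := ∑ j, t j • x j with hv
  set y := ∑ j, (q j : ℝ) • x j with hy
  have hvy : ‖v - y‖ ≤ ε / 2 := by
    have h1 : v - y = ∑ j, (t j - (q j : ℝ)) • x j := by
      rw [hv, hy, ← Finset.sum_sub_distrib]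
      exact Finset.sum_congr rfl fun j _ => (sub_smul _ _ _).symm
    rw [h1]
    calc ‖∑ j, (t j - (q j : ℝ)) • x j‖ ≤ ∑ j, ‖(t j - (q j : ℝ)) • x j‖ :=
          norm_sum_le _ _
      _ ≤ ∑ j, (ε / (2 * M)) * ‖x j‖ := by
          apply Finset.sum_le_sum
          intro j _
          rw [norm_smul, Real.norm_eq_abs]
          exact mul_le_mul_of_nonneg_right (hq j).le (norm_nonneg _)
      _ = (ε / (2 * M)) * ∑ j, ‖x j‖ := by rw [Finset.mul_sum]
      _ ≤ (ε / (2 * M)) * M := by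
          apply mul_le_mul_of_nonneg_left _ hδ.le
          rw [hM]; linarith
      _ = ε / 2 := by field_simp
  refine ⟨q, ?_⟩
  have h1 : ‖v‖ ≤ ‖y‖ + ‖v - y‖ := by
    calc ‖v‖ = ‖y + (v - y)‖ := by rw [add_sub_cancel]
      _ ≤ ‖y‖ + ‖v - y‖ := norm_add_le _ _
  have h2 : ‖y‖ = (φ q) y := (hφ2 q).symm
  have h3 : (φ q) y - (φ q) v ≤ ‖v - y‖ := by
    have : (φ q) y - (φ q) v = (φ q) (y - v) := by rw [map_sub]
    rw [this]
    calc (φ q) (y - v) ≤ |(φ q) (y - v)| := le_abs_self _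
      _ ≤ ‖φ q‖ * ‖y - v‖ := (φ q).le_opNorm _
      _ ≤ 1 * ‖y - v‖ := mul_le_mul_of_nonneg_right (hφ1 q) (norm_nonneg _)
      _ = ‖v - y‖ := by rw [one_mul, norm_sub_rev]
  linarith
end Norming

section Ext
variable {α β E G : Type*} [MeasurableSpace α] [MeasurableSpace β]
  {μ : Measure α} {ν : Measure β}
  [NormedAddCommGroup E] [Lattice E] [HasSolidNorm E] [IsOrderedAddMonoid E] [NormedSpace ℝ E]
  [NormedAddCommGroup G] [Lattice G] [HasSolidNorm G] [IsOrderedAddMonoid G] [NormedSpace ℝ G]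
  {X : Type*} [NormedAddCommGroup X] [NormedSpace ℝ X]
  [CompleteSpace E] [CompleteSpace G]
  {ιE : E →ₗ[ℝ] (α →ₘ[μ] ℝ)} {ιG : G →ₗ[ℝ] (β →ₘ[ν] ℝ)}

/-- coeFn of the embedding of a linear combination -/
theorem coeFn_comb (ι' : E →ₗ[ℝ] (α →ₘ[μ] ℝ)) {k : Type*} [Fintype k]
    (c : k → ℝ) (u : k → E) :
    ⇑(ι' (∑ j, c j • u j)) =ᵐ[μ] fun a => ∑ j, c j * (ι' (u j)) a := by
  have h0 : ι' (∑ j, c j • u j) = ∑ j, c j • ι' (u j) := by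
    rw [map_sum]
    exact Finset.sum_congr rfl fun j _ => map_smul ι' (c j) (u j)
  have h2 : ∀ᵐ a ∂μ, ∀ j, (c j • ι' (u j)) a = c j * (ι' (u j)) a := by
    rw [ae_all_iff]
    intro j
    filter_upwards [AEEqFun.coeFn_smul (c j) (ι' (u j))] with a h
    simpa [smul_eq_mul] using h
  rw [h0]
  filter_upwards [coeFn_fsum Finset.univ (fun j => c j • ι' (u j)), h2] with a h1 h2
  rw [h1]
  exact Finset.sum_congr rfl fun j _ => h2 j

/-- Key domination lemma for the tensor extension. -/
theorem keyDom (hE : IsBanachFunctionSpace μ E ιE) (hG : IsBanachFunctionSpace ν G ιG)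
    (S R : E →L[ℝ] G) (hRpos : ∀ e : E, 0 ≤ e → 0 ≤ R e)
    (hdom : ∀ e : E, |S e| ≤ R |e|)
    {k : Type*} [Fintype k] (u : k → E) (x : k → X) {e : E}
    (he : ∀ᵐ a ∂μ, ‖∑ j, (ιE (u j)) a • x j‖ ≤ (ιE e) a) :
    ∀ᵐ b ∂ν, ‖∑ j, (ιG (S (u j))) b • x j‖ ≤ (ιG (R e)) b := by
  obtain ⟨φ, hφ1, hφ2⟩ := norming x
  set c : (k → ℚ) → k → ℝ := fun q j => (φ q) (x j) with hc
  set w : (k → ℚ) → E := fun q => ∑ j, c q j • u j with hw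
  have claim1 : ∀ q, |w q| ≤ e := by
    intro q
    apply bfs_abs_le_of_ae hE
    filter_upwards [he, coeFn_comb ιE (c q) u] with a h1 h2
    rw [hw]; rw [h2]
    have h3 : ∑ j, c q j * (ιE (u j)) a = (φ q) (∑ j, (ιE (u j)) a • x j) := by
      rw [map_sum]
      exact Finset.sum_congr rfl fun j _ => by
        rw [(φ q).map_smul, smul_eq_mul, mul_comm]
    rw [h3]
    calc |(φ q) (∑ j, (ιE (u j)) a • x j)| ≤ ‖φ q‖ * ‖∑ j, (ιE (u j)) a • x j‖ :=
          (φ q).le_opNorm _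
      _ ≤ 1 * ((ιE e) a) := by
          apply mul_le_mul (hφ1 q) h1 (norm_nonneg _) zero_le_one
      _ = (ιE e) a := one_mul _
  have claim2 : ∀ q, |S (w q)| ≤ R e := by
    intro q
    refine (hdom (w q)).trans ?_
    have h := hRpos _ (sub_nonneg.2 (claim1 q))
    rw [map_sub] at h
    exact sub_nonneg.1 h
  have claim3 : ∀ᵐ b ∂ν, ∀ q, |(ιG (S (w q))) b| ≤ (ιG (R e)) b :=
    ae_all_iff.2 fun q => bfs_ae_abs_le hG (claim2 q)
  have claim4 : ∀ᵐ b ∂ν, ∀ q, (ιG (S (w q))) b = ∑ j, c q j * (ιG (S (u j))) b := by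
    rw [ae_all_iff]
    intro q
    have hS : S (w q) = ∑ j, c q j • S (u j) := by
      rw [hw, map_sum]
      exact Finset.sum_congr rfl fun j _ => map_smul S (c q j) (u j)
    have := coeFn_comb ιG (c q) (fun j => S (u j))
    rw [← hS] at this
    exact this
  filter_upwards [claim3, claim4] with b h3 h4
  refine le_of_forall_pos_le_add ?_
  intro ε hε
  obtain ⟨q, hq⟩ := hφ2 (fun j => (ιG (S (u j))) b) ε hε
  have h5 : (φ q) (∑ j, (ιG (S (u j))) b • x j) = (ιG (S (w q))) b := by
    rw [h4 q, map_sum]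
    exact Finset.sum_congr rfl fun j _ => by rw [(φ q).map_smul, smul_eq_mul, mul_comm]
  rw [h5] at hq
  have h6 := (le_abs_self ((ιG (S (w q))) b)).trans (h3 q)
  linarith
end Ext

section Ext2
variable {α β E G : Type*} [MeasurableSpace α] [MeasurableSpace β]
  {μ : Measure α} {ν : Measure β}
  [NormedAddCommGroup E] [Lattice E] [HasSolidNorm E] [IsOrderedAddMonoid E] [NormedSpace ℝ E]
  [NormedAddCommGroup G] [Lattice G] [HasSolidNorm G] [IsOrderedAddMonoid G] [NormedSpace ℝ G]
  {X : Type*} [NormedAddCommGroup X] [NormedSpace ℝ X]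
  [CompleteSpace E] [CompleteSpace G]
  {ιE : E →ₗ[ℝ] (α →ₘ[μ] ℝ)} {ιG : G →ₗ[ℝ] (β →ₘ[ν] ℝ)}

theorem vanish (hG : IsBanachFunctionSpace ν G ιG) {φ : β → ℝ}
    (hφ : AEStronglyMeasurable φ ν) (hpos : ∀ᵐ b ∂ν, 0 ≤ φ b)
    (H : ∀ δ > (0:ℝ), ∃ g : G, (∀ᵐ b ∂ν, φ b ≤ (ιG g) b) ∧ ‖g‖ < δ) :
    φ =ᵐ[ν] 0 := by
  obtain ⟨g1, hg1, _⟩ := H 1 one_pos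
  obtain ⟨e', he1, _⟩ := bfs_rep hG hφ (μ := ν)
    (by filter_upwards [hg1, hpos] with b h1 h2; rwa [abs_of_nonneg h2])
  have hne : ∀ δ > (0:ℝ), ‖e'‖ < δ := by
    intro δ hδ
    obtain ⟨g, hg, hgn⟩ := H δ hδ
    have h2 : |e'| ≤ g := by
      apply bfs_abs_le_of_ae hG
      filter_upwards [he1, hg, hpos] with b h1 h2 h3
      rw [← h1, abs_of_nonneg h3]; exact h2
    exact lt_of_le_of_lt (bfs_norm_le h2) hgn
  have he0 : e' = 0 := by
    by_contra h
    exact absurd (hne ‖e'‖ (norm_pos_iff.2 h)) (lt_irrefl _)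
  rw [he0] at he1
  have hz : ⇑(ιG (0:G)) =ᵐ[ν] fun _ => (0:ℝ) :=
    map_zero ιG ▸ AEEqFun.coeFn_zero (β := ℝ) (μ := ν)
  filter_upwards [he1, hz] with b h1 h2
  rw [h1, h2]; rfl

theorem tensorAESM (ι' : G →ₗ[ℝ] (β →ₘ[ν] ℝ)) {k : Type*} [Fintype k]
    (u : k → G) (x : k → X) :
    AEStronglyMeasurable (fun b => ∑ j, (ι' (u j)) b • x j) ν :=
  Finset.aestronglyMeasurable_fun_sum _ fun j _ =>
    (AEEqFun.aestronglyMeasurable _).smul aestronglyMeasurable_const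

theorem sum_fin_eq {M : Type*} [AddCommMonoid M] {k : Type*} [Fintype k] (g : k → M) :
    ∑ j : Fin (Fintype.card k), g ((Fintype.equivFin k).symm j) = ∑ j : k, g j :=
  (Fintype.equivFin k).symm.sum_comp g

theorem mem_closure_of_approx (hE : IsBanachFunctionSpace μ E ιE)
    {f : α → X} (hf : AEStronglyMeasurable f μ)
    (H : ∀ ε > (0:ℝ), ∃ (k : Type) (_ : Fintype k) (u : k → E) (x : k → X) (e : E),
        (∀ᵐ a ∂μ, ‖f a - ∑ j, (ιE (u j)) a • x j‖ ≤ (ιE e) a) ∧ ‖e‖ < ε) :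
    InTensorClosure ιE f := by
  refine ⟨hf, fun ε hε => ?_⟩
  obtain ⟨k, _, u, x, e, hb, hn⟩ := H ε hε
  set u' : Fin (Fintype.card k) → E := fun j => u ((Fintype.equivFin k).symm j) with hu'
  set x' : Fin (Fintype.card k) → X := fun j => x ((Fintype.equivFin k).symm j) with hx'
  have hsum : ∀ a : α, ∑ j, (ιE (u' j)) a • x' j = ∑ j, (ιE (u j)) a • x j :=
    fun a => sum_fin_eq (fun j => (ιE (u j)) a • x j)
  set ψ : α → ℝ := fun a => ‖f a - ∑ j, (ιE (u' j)) a • x' j‖ with hψ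
  have hψm : AEStronglyMeasurable ψ μ := (hf.sub (tensorAESM ιE u' x')).norm
  obtain ⟨e', he1, he2⟩ := bfs_rep hE hψm (e := e)
    (by filter_upwards [hb] with a h1
        rw [hψ]; simp only [hsum a]
        rw [abs_of_nonneg (norm_nonneg _)]; exact h1)
  exact ⟨_, u', x', e', he1, lt_of_le_of_lt (bfs_norm_le he2) hn⟩

theorem memKB_of_closure (hG : IsBanachFunctionSpace ν G ιG)
    {f : β → X} (hf : InTensorClosure ιG f) :
    ∃ g : G, MemKB ιG f g ∧ 0 ≤ g := by
  obtain ⟨k, u, x, e, hrep, _⟩ := hf.2 1 one_pos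
  set E0 : G := e + ∑ j, ‖x j‖ • |u j| with hE0
  have h0 : ιG E0 = ιG e + ∑ j, ‖x j‖ • ιG |u j| := by
    rw [hE0, map_add, map_sum]
    congr 1
    exact Finset.sum_congr rfl fun j _ => map_smul ιG _ _
  have habs : ∀ᵐ b ∂ν, ∀ j, (‖x j‖ • ιG |u j|) b = ‖x j‖ * |(ιG (u j)) b| := by
    rw [ae_all_iff]; intro j
    filter_upwards [AEEqFun.coeFn_smul (‖x j‖) (ιG |u j|), hG.map_abs (u j)] with b h1 h2
    rw [h1]; simp only [Pi.smul_apply, smul_eq_mul, h2]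
  have hcoe : ⇑(ιG E0) =ᵐ[ν] fun b => (ιG e) b + ∑ j, ‖x j‖ * |(ιG (u j)) b| := by
    rw [h0]
    filter_upwards [AEEqFun.coeFn_add (ιG e) (∑ j, ‖x j‖ • ιG |u j|),
      coeFn_fsum Finset.univ (fun j => ‖x j‖ • ιG |u j|), habs] with b h1 h2 h3
    simp only [Pi.add_apply] at h1
    rw [h1, h2]
    exact congrArg _ (Finset.sum_congr rfl fun j _ => h3 j)
  have hb : ∀ᵐ b ∂ν, |‖f b‖| ≤ (ιG E0) b := by
    filter_upwards [hrep, hcoe] with b h1 h2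
    rw [abs_of_nonneg (norm_nonneg _), h2]
    calc ‖f b‖ ≤ ‖f b - ∑ j, (ιG (u j)) b • x j‖ + ‖∑ j, (ιG (u j)) b • x j‖ := by
          have := norm_add_le (f b - ∑ j, (ιG (u j)) b • x j) (∑ j, (ιG (u j)) b • x j)
          simpa using this
      _ ≤ (ιG e) b + ∑ j, ‖x j‖ * |(ιG (u j)) b| := by
          apply add_le_add (le_of_eq h1)
          calc ‖∑ j, (ιG (u j)) b • x j‖ ≤ ∑ j, ‖(ιG (u j)) b • x j‖ := norm_sum_le _ _
            _ = ∑ j, ‖x j‖ * |(ιG (u j)) b| := Finset.sum_congr rfl fun j _ => by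
                rw [norm_smul, Real.norm_eq_abs, mul_comm]
  obtain ⟨g, hg1, _⟩ := bfs_rep hG hf.1.norm hb
  refine ⟨g, ⟨hf.1, hg1⟩, bfs_nonneg_of_ae hG ?_⟩
  filter_upwards [hg1] with b h
  rw [← h]; positivity

theorem closure_seq (hE : IsBanachFunctionSpace μ E ιE) (S : E →L[ℝ] G)
    {f : α → X} (hf : InTensorClosure ιE f) :
    ∃ (g : ℕ → α → X) (g' : ℕ → β → X) (e : ℕ → E),
      (∀ n, ∃ (k : ℕ) (u : Fin k → E) (x : Fin k → X),
        g n = (fun a => ∑ j, (ιE (u j)) a • x j) ∧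
        g' n = fun b => ∑ j, (ιG (S (u j))) b • x j) ∧
      (∀ n, (fun a => ‖f a - g n a‖) =ᵐ[μ] ⇑(ιE (e n))) ∧
      (∀ n, ‖e n‖ < (1/2 : ℝ)^n) ∧ (∀ n, 0 ≤ e n) := by
  have H : ∀ n : ℕ, ∃ (k : ℕ) (u : Fin k → E) (x : Fin k → X) (e : E),
      ((fun a => ‖f a - ∑ j, (ιE (u j)) a • x j‖) =ᵐ[μ] ⇑(ιE e)) ∧ ‖e‖ < (1/2:ℝ)^n :=
    fun n => hf.2 ((1/2:ℝ)^n) (by positivity)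
  choose k u x e h1 h2 using H
  refine ⟨fun n a => ∑ j, (ιE (u n j)) a • x n j,
    fun n b => ∑ j, (ιG (S (u n j))) b • x n j, e,
    fun n => ⟨k n, u n, x n, rfl, rfl⟩, h1, h2, fun n => ?_⟩
  apply bfs_nonneg_of_ae hE
  filter_upwards [h1 n] with a h
  rw [← h]; positivity
end Ext2

section Ext3
variable {α β E G : Type*} [MeasurableSpace α] [MeasurableSpace β]
  {μ : Measure α} {ν : Measure β}
  [NormedAddCommGroup E] [Lattice E] [HasSolidNorm E] [IsOrderedAddMonoid E] [NormedSpace ℝ E]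
  [NormedAddCommGroup G] [Lattice G] [HasSolidNorm G] [IsOrderedAddMonoid G] [NormedSpace ℝ G]
  {X : Type*} [NormedAddCommGroup X] [NormedSpace ℝ X]
  [CompleteSpace E] [CompleteSpace G] [CompleteSpace X]

variable (ιE : E →ₗ[ℝ] (α →ₘ[μ] ℝ)) (ιG : G →ₗ[ℝ] (β →ₘ[ν] ℝ))

noncomputable def csG (hE : IsBanachFunctionSpace μ E ιE) (S : E →L[ℝ] G)
    {f : α → X} (hf : InTensorClosure ιE f) : ℕ → α → X :=
  (closure_seq (ιG := ιG) hE S hf).choose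

noncomputable def csG' (hE : IsBanachFunctionSpace μ E ιE) (S : E →L[ℝ] G)
    {f : α → X} (hf : InTensorClosure ιE f) : ℕ → β → X :=
  (closure_seq (ιG := ιG) hE S hf).choose_spec.choose

noncomputable def csE (hE : IsBanachFunctionSpace μ E ιE) (S : E →L[ℝ] G)
    {f : α → X} (hf : InTensorClosure ιE f) : ℕ → E :=
  (closure_seq (ιG := ιG) hE S hf).choose_spec.choose_spec.choose

theorem cs_spec (hE : IsBanachFunctionSpace μ E ιE) (S : E →L[ℝ] G)
    {f : α → X} (hf : InTensorClosure ιE f) :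
    (∀ n, ∃ (k : ℕ) (u : Fin k → E) (x : Fin k → X),
        csG ιE ιG hE S hf n = (fun a => ∑ j, (ιE (u j)) a • x j) ∧
        csG' ιE ιG hE S hf n = fun b => ∑ j, (ιG (S (u j))) b • x j) ∧
      (∀ n, (fun a => ‖f a - csG ιE ιG hE S hf n a‖) =ᵐ[μ] ⇑(ιE (csE ιE ιG hE S hf n))) ∧
      (∀ n, ‖csE ιE ιG hE S hf n‖ < (1/2 : ℝ)^n) ∧ (∀ n, 0 ≤ csE ιE ιG hE S hf n) :=
  (closure_seq (ιG := ιG) hE S hf).choose_spec.choose_spec.choose_spec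

open Classical in
noncomputable def SXfun (hE : IsBanachFunctionSpace μ E ιE) (S : E →L[ℝ] G)
    (f : α → X) : β → X :=
  if hf : InTensorClosure ιE f then
    fun b => limUnder Filter.atTop (fun n => csG' ιE ιG hE S hf n b)
  else 0

set_option maxHeartbeats 2000000 in
theorem base (hE : IsBanachFunctionSpace μ E ιE) (hG : IsBanachFunctionSpace ν G ιG)
    (S R : E →L[ℝ] G) (hRpos : ∀ e : E, 0 ≤ e → 0 ≤ R e)
    (hdom : ∀ e : E, |S e| ≤ R |e|)
    {f : α → X} (hf : InTensorClosure ιE f) :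
    AEStronglyMeasurable (SXfun ιE ιG hE S f) ν ∧
    ∃ tail : ℕ → G, (∀ n, 0 ≤ tail n) ∧ (∀ n, ‖tail n‖ ≤ 4 * ‖R‖ * (1/2:ℝ)^n) ∧
      ∀ᵐ b ∂ν, (Filter.Tendsto (fun n => csG' ιE ιG hE S hf n b) Filter.atTop
          (nhds (SXfun ιE ιG hE S f b))) ∧
        ∀ n, ‖SXfun ιE ιG hE S f b - csG' ιE ιG hE S hf n b‖ ≤ (ιG (tail n)) b := by
  obtain ⟨hdata, hrep, hnorm, hnn⟩ := cs_spec ιE ιG hE S hf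
  set g := csG ιE ιG hE S hf
  set g' := csG' ιE ιG hE S hf
  set e := csE ιE ιG hE S hf
  set h : ℕ → G := fun n => R (e n + e (n+1)) with hh
  have hhnn : ∀ n, 0 ≤ h n := fun n => hRpos _ (add_nonneg (hnn n) (hnn (n+1)))
  have hhnorm : ∀ n, ‖h n‖ ≤ 2 * ‖R‖ * (1/2:ℝ)^n := by
    intro n
    calc ‖h n‖ ≤ ‖R‖ * ‖e n + e (n+1)‖ := R.le_opNorm _
      _ ≤ ‖R‖ * (‖e n‖ + ‖e (n+1)‖) :=
          mul_le_mul_of_nonneg_left (norm_add_le _ _) (norm_nonneg R)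
      _ ≤ ‖R‖ * ((1/2:ℝ)^n + (1/2:ℝ)^(n+1)) := by
          apply mul_le_mul_of_nonneg_left _ (norm_nonneg R)
          exact add_le_add (hnorm n).le (hnorm (n+1)).le
      _ ≤ 2 * ‖R‖ * (1/2:ℝ)^n := by
          rw [pow_succ]
          nlinarith [norm_nonneg R, pow_nonneg (by norm_num : (0:ℝ) ≤ 1/2) n]
  have hsumn : ∀ n, Summable (fun i => ‖h (n + i)‖) := by
    intro n
    refine Summable.of_nonneg_of_le (fun i => norm_nonneg _) (fun i => ?_)
      (((summable_geometric_of_lt_one (r := (1/2:ℝ)) (by norm_num) (by norm_num)).mul_left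
        (2 * ‖R‖ * (1/2:ℝ)^n)))
    calc ‖h (n+i)‖ ≤ 2 * ‖R‖ * (1/2:ℝ)^(n+i) := hhnorm (n+i)
      _ = (2 * ‖R‖ * (1/2:ℝ)^n) * (1/2:ℝ)^i := by rw [pow_add]; ring
  have hsum : ∀ n, Summable (fun i => h (n + i)) := fun n => (hsumn n).of_norm
  set tail : ℕ → G := fun n => ∑' i, h (n + i) with htail
  have htnn : ∀ n, 0 ≤ tail n := fun n => tsum_nonneg (fun i => hhnn (n+i))
  have htnorm : ∀ n, ‖tail n‖ ≤ 4 * ‖R‖ * (1/2:ℝ)^n := by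
    intro n
    calc ‖tail n‖ ≤ ∑' i, ‖h (n+i)‖ := norm_tsum_le_tsum_norm (hsumn n)
      _ ≤ ∑' i : ℕ, (2 * ‖R‖ * (1/2:ℝ)^n) * (1/2:ℝ)^i := by
          apply Summable.tsum_le_tsum _ (hsumn n)
            ((summable_geometric_of_lt_one (r := (1/2:ℝ)) (by norm_num) (by norm_num)).mul_left _)
          intro i
          calc ‖h (n+i)‖ ≤ 2 * ‖R‖ * (1/2:ℝ)^(n+i) := hhnorm (n+i)
            _ = (2 * ‖R‖ * (1/2:ℝ)^n) * (1/2:ℝ)^i := by rw [pow_add]; ring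
      _ = (2 * ‖R‖ * (1/2:ℝ)^n) * 2 := by
          rw [tsum_mul_left, tsum_geometric_two]
      _ = 4 * ‖R‖ * (1/2:ℝ)^n := by ring
  -- step bound
  have hstep : ∀ n, ∀ᵐ b ∂ν, ‖g' n b - g' (n+1) b‖ ≤ (ιG (h n)) b := by
    intro n
    obtain ⟨k1, u1, x1, hg1, hg1'⟩ := hdata n
    obtain ⟨k2, u2, x2, hg2, hg2'⟩ := hdata (n+1)
    set u : Fin k1 ⊕ Fin k2 → E := Sum.elim u1 u2 with hu
    set x : Fin k1 ⊕ Fin k2 → X := Sum.elim x1 (fun j => - x2 j) with hx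
    have hsumE : ∀ a, ∑ j, (ιE (u j)) a • x j = g n a - g (n+1) a := by
      intro a
      rw [Fintype.sum_sum_type]
      simp only [hu, hx, Sum.elim_inl, Sum.elim_inr, smul_neg, Finset.sum_neg_distrib]
      rw [hg1, hg2, sub_eq_add_neg]
    have hsumG : ∀ b, ∑ j, (ιG (S (u j))) b • x j = g' n b - g' (n+1) b := by
      intro b
      rw [Fintype.sum_sum_type]
      simp only [hu, hx, Sum.elim_inl, Sum.elim_inr, smul_neg, Finset.sum_neg_distrib]
      rw [hg1', hg2', sub_eq_add_neg]
    have hcadd : ⇑(ιE (e n + e (n+1))) =ᵐ[μ] fun a => (ιE (e n)) a + (ιE (e (n+1))) a := by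
      rw [map_add]
      filter_upwards [AEEqFun.coeFn_add (ιE (e n)) (ιE (e (n+1)))] with a ha
      simpa using ha
    have hkey := keyDom hE hG S R hRpos hdom u x (e := e n + e (n+1)) ?_
    · filter_upwards [hkey] with b hb
      rw [← hsumG b]; exact hb
    · filter_upwards [hrep n, hrep (n+1), hcadd] with a h1 h2 h3
      rw [hsumE a, h3]
      have : g n a - g (n+1) a = (f a - g (n+1) a) - (f a - g n a) := by abel
      rw [this]
      calc ‖(f a - g (n+1) a) - (f a - g n a)‖
          ≤ ‖f a - g (n+1) a‖ + ‖f a - g n a‖ := norm_sub_le _ _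
        _ = (ιE (e (n+1))) a + (ιE (e n)) a := by rw [h1, h2]
        _ = (ιE (e n)) a + (ιE (e (n+1))) a := by ring
  have hpart : ∀ n N, ∑ i ∈ Finset.range N, h (n + i) ≤ tail n := by
    intro n N
    exact Summable.sum_le_tsum (Finset.range N) (fun i _ => hhnn (n+i)) (hsum n)
  have hpae : ∀ᵐ b ∂ν, ∀ n N, ∑ i ∈ Finset.range N, (ιG (h (n+i))) b ≤ (ιG (tail n)) b := by
    rw [ae_all_iff]; intro n; rw [ae_all_iff]; intro N
    have hc : ⇑(ιG (∑ i ∈ Finset.range N, h (n+i))) =ᵐ[ν]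
        fun b => ∑ i ∈ Finset.range N, (ιG (h (n+i))) b := by
      rw [map_sum]
      exact coeFn_fsum (Finset.range N) (fun i => ιG (h (n+i)))
    filter_upwards [hc, bfs_ae_of_le hG (hpart n N)] with b h1 h2
    rw [← h1]; exact h2
  have hhae : ∀ᵐ b ∂ν, ∀ n, 0 ≤ (ιG (h n)) b :=
    ae_all_iff.2 fun n => bfs_ae_nonneg hG (hhnn n)
  have hstep_ae : ∀ᵐ b ∂ν, ∀ n, ‖g' n b - g' (n+1) b‖ ≤ (ιG (h n)) b :=
    ae_all_iff.2 hstep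
  have hmain : ∀ᵐ b ∂ν, (Filter.Tendsto (fun n => g' n b) Filter.atTop
      (nhds (SXfun ιE ιG hE S f b))) ∧
      ∀ n, ‖SXfun ιE ιG hE S f b - g' n b‖ ≤ (ιG (tail n)) b := by
    filter_upwards [hpae, hhae, hstep_ae] with b hp hh0 hs
    have hsb : Summable (fun i => (ιG (h i)) b) := by
      apply summable_of_sum_range_le (c := (ιG (tail 0)) b) (fun i => hh0 i)
      intro N
      simpa using hp 0 N
    have hcauchy : CauchySeq (fun n => g' n b) :=
      cauchySeq_of_dist_le_of_summable _ (fun n => by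
        rw [dist_eq_norm]; exact hs n) hsb
    obtain ⟨y, hy⟩ := cauchySeq_tendsto_of_complete hcauchy
    have hSX : SXfun ιE ιG hE S f b = y := by
      rw [SXfun, dif_pos hf]
      exact hy.limUnder_eq
    rw [hSX]
    refine ⟨hy, fun n => ?_⟩
    have hmono : ∀ m, ‖g' (n + m) b - g' n b‖ ≤ ∑ i ∈ Finset.range m, (ιG (h (n+i))) b := by
      intro m
      induction m with
      | zero => simp
      | succ m ih =>
        calc ‖g' (n+(m+1)) b - g' n b‖
            ≤ ‖g' (n+(m+1)) b - g' (n+m) b‖ + ‖g' (n+m) b - g' n b‖ := by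
              have h3 : g' (n+(m+1)) b - g' n b =
                (g' (n+(m+1)) b - g' (n+m) b) + (g' (n+m) b - g' n b) := by abel
              rw [h3]; exact norm_add_le _ _
          _ ≤ (ιG (h (n+m))) b + ∑ i ∈ Finset.range m, (ιG (h (n+i))) b := by
              apply add_le_add _ ih
              rw [norm_sub_rev]
              exact hs (n+m)
          _ = ∑ i ∈ Finset.range (m+1), (ιG (h (n+i))) b := by
              rw [Finset.sum_range_succ]; ring
    have hb2 : ∀ m, ‖g' (n+m) b - g' n b‖ ≤ (ιG (tail n)) b :=
      fun m => (hmono m).trans (hp n m)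
    have h2 : Filter.Tendsto (fun m => ‖g' (n+m) b - g' n b‖) Filter.atTop
        (nhds ‖y - g' n b‖) := by
      have := ((hy.comp (Filter.tendsto_add_atTop_nat n)).sub
        (tendsto_const_nhds (x := g' n b))).norm
      simpa [Function.comp, Nat.add_comm] using this
    exact le_of_tendsto h2 (Filter.Eventually.of_forall hb2)
  have hAESM : AEStronglyMeasurable (SXfun ιE ιG hE S f) ν := by
    apply aestronglyMeasurable_of_tendsto_ae Filter.atTop (f := fun n => g' n)
    · intro n
      obtain ⟨k, u, x, _, hgn'⟩ := hdata n
      rw [hgn']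
      exact tensorAESM ιG (fun j => S (u j)) x
    · filter_upwards [hmain] with b hb
      exact hb.1
  exact ⟨hAESM, tail, htnn, htnorm, hmain⟩
end Ext3

section Ext4
variable {α β E G : Type*} [MeasurableSpace α] [MeasurableSpace β]
  {μ : Measure α} {ν : Measure β}
  [NormedAddCommGroup E] [Lattice E] [HasSolidNorm E] [IsOrderedAddMonoid E] [NormedSpace ℝ E]
  [NormedAddCommGroup G] [Lattice G] [HasSolidNorm G] [IsOrderedAddMonoid G] [NormedSpace ℝ G]
  {X : Type*} [NormedAddCommGroup X] [NormedSpace ℝ X]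
  [CompleteSpace E] [CompleteSpace G] [CompleteSpace X]
  (ιE : E →ₗ[ℝ] (α →ₘ[μ] ℝ)) (ιG : G →ₗ[ℝ] (β →ₘ[ν] ℝ))

set_option maxHeartbeats 1000000 in
theorem core (hE : IsBanachFunctionSpace μ E ιE) (hG : IsBanachFunctionSpace ν G ιG)
    (S R : E →L[ℝ] G) (hRpos : ∀ e : E, 0 ≤ e → 0 ≤ R e)
    (hdom : ∀ e : E, |S e| ≤ R |e|)
    {f : α → X} (hf : InTensorClosure ιE f) {φ : β → X}
    (hφ : AEStronglyMeasurable φ ν)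
    (H : ∀ ε > (0:ℝ), ∃ (k : Type) (_ : Fintype k) (u : k → E) (x : k → X) (e : E) (g : G),
        (∀ᵐ a ∂μ, ‖f a - ∑ j, (ιE (u j)) a • x j‖ ≤ (ιE e) a) ∧ ‖e‖ < ε ∧
        (∀ᵐ b ∂ν, ‖φ b - ∑ j, (ιG (S (u j))) b • x j‖ ≤ (ιG g) b) ∧ ‖g‖ < ε) :
    φ =ᵐ[ν] SXfun ιE ιG hE S f := by
  obtain ⟨hSXm, tail, htnn, htb, htail⟩ := base ιE ιG hE hG S R hRpos hdom hf
  obtain ⟨hdata, hrep, hnorme, hnne⟩ := cs_spec ιE ιG hE S hf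
  set ψ : β → ℝ := fun b => ‖φ b - SXfun ιE ιG hE S f b‖ with hψ
  have hψ0 : ψ =ᵐ[ν] 0 := by
    apply vanish hG ((hφ.sub hSXm).norm) (Filter.Eventually.of_forall fun b => norm_nonneg _)
    intro δ hδ
    obtain ⟨K, hK⟩ : ∃ K : ℝ, K = ‖R‖ + 1 := ⟨_, rfl⟩
    have hK0 : 0 < K := by rw [hK]; positivity
    obtain ⟨ε, hε⟩ : ∃ ε : ℝ, ε = δ / (12 * K) := ⟨_, rfl⟩
    have hε0 : 0 < ε := by rw [hε]; positivity
    obtain ⟨k, _, u, x, e, g, hEa, hen, hGb, hgn⟩ := H ε hε0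
    obtain ⟨n, hpow⟩ := exists_pow_lt_of_lt_one hε0 (by norm_num : (1/2:ℝ) < 1)
    obtain ⟨kn, un, xn, hgen, hgen'⟩ := hdata n
    -- combined tensor data for the middle comparison
    set uu : k ⊕ Fin kn → E := Sum.elim u un with huu
    set xx : k ⊕ Fin kn → X := Sum.elim x (fun j => - xn j) with hxx
    have hsumE : ∀ a, ∑ j, (ιE (uu j)) a • xx j =
        (∑ j, (ιE (u j)) a • x j) - csG ιE ιG hE S hf n a := by
      intro a
      rw [Fintype.sum_sum_type]
      simp only [huu, hxx, Sum.elim_inl, Sum.elim_inr, smul_neg, Finset.sum_neg_distrib]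
      rw [hgen, sub_eq_add_neg]
    have hsumG : ∀ b, ∑ j, (ιG (S (uu j))) b • xx j =
        (∑ j, (ιG (S (u j))) b • x j) - csG' ιE ιG hE S hf n b := by
      intro b
      rw [Fintype.sum_sum_type]
      simp only [huu, hxx, Sum.elim_inl, Sum.elim_inr, smul_neg, Finset.sum_neg_distrib]
      rw [hgen', sub_eq_add_neg]
    have hcadd : ⇑(ιE (e + csE ιE ιG hE S hf n)) =ᵐ[μ]
        fun a => (ιE e) a + (ιE (csE ιE ιG hE S hf n)) a := by
      rw [map_add]
      filter_upwards [AEEqFun.coeFn_add (ιE e) (ιE (csE ιE ιG hE S hf n))] with a ha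
      simpa using ha
    have hmid := keyDom hE hG S R hRpos hdom uu xx (e := e + csE ιE ιG hE S hf n) ?_
    swap
    · filter_upwards [hEa, hrep n, hcadd] with a h1 h2 h3
      rw [hsumE a, h3]
      have h4 : (∑ j, (ιE (u j)) a • x j) - csG ιE ιG hE S hf n a =
          (f a - csG ιE ιG hE S hf n a) - (f a - ∑ j, (ιE (u j)) a • x j) := by abel
      rw [h4]
      calc ‖(f a - csG ιE ιG hE S hf n a) - (f a - ∑ j, (ιE (u j)) a • x j)‖
          ≤ ‖f a - csG ιE ιG hE S hf n a‖ + ‖f a - ∑ j, (ιE (u j)) a • x j‖ :=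
            norm_sub_le _ _
        _ ≤ (ιE e) a + (ιE (csE ιE ιG hE S hf n)) a := by
            rw [h2]; linarith [h1]
    -- total bound
    set gt : G := g + R (e + csE ιE ιG hE S hf n) + tail n with hgt
    have hcaddG : ⇑(ιG gt) =ᵐ[ν] fun b => (ιG g) b +
        (ιG (R (e + csE ιE ιG hE S hf n))) b + (ιG (tail n)) b := by
      rw [hgt, map_add, map_add]
      filter_upwards [AEEqFun.coeFn_add (ιG g + ιG (R (e + csE ιE ιG hE S hf n))) (ιG (tail n)),
        AEEqFun.coeFn_add (ιG g) (ιG (R (e + csE ιE ιG hE S hf n)))] with b h1 h2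
      simp only [Pi.add_apply] at h1 h2
      rw [h1, h2]
    refine ⟨gt, ?_, ?_⟩
    · filter_upwards [hGb, hmid, htail, hcaddG] with b h1 h2 h3 h4
      simp only [Pi.sub_apply]
      rw [h4]
      rw [hsumG b] at h2
      calc ‖φ b - SXfun ιE ιG hE S f b‖
          ≤ ‖φ b - ∑ j, (ιG (S (u j))) b • x j‖ +
            ‖(∑ j, (ιG (S (u j))) b • x j) - csG' ιE ιG hE S hf n b‖ +
            ‖csG' ιE ιG hE S hf n b - SXfun ιE ιG hE S f b‖ := by
              have heq : φ b - SXfun ιE ιG hE S f b =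
                (φ b - ∑ j, (ιG (S (u j))) b • x j) +
                ((∑ j, (ιG (S (u j))) b • x j) - csG' ιE ιG hE S hf n b) +
                (csG' ιE ιG hE S hf n b - SXfun ιE ιG hE S f b) := by abel
              rw [heq]
              exact (norm_add_le _ _).trans (add_le_add_left (norm_add_le _ _) _)
      _ ≤ (ιG g) b + (ιG (R (e + csE ιE ιG hE S hf n))) b + (ιG (tail n)) b := by
          apply add_le_add (add_le_add h1 h2)
          rw [norm_sub_rev]
          exact h3.2 n
    · -- norm bound
      have h5 : ‖gt‖ ≤ ‖g‖ + ‖R‖ * (‖e‖ + ‖csE ιE ιG hE S hf n‖) + ‖tail n‖ := by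
        calc ‖gt‖ ≤ ‖g + R (e + csE ιE ιG hE S hf n)‖ + ‖tail n‖ := norm_add_le _ _
          _ ≤ ‖g‖ + ‖R (e + csE ιE ιG hE S hf n)‖ + ‖tail n‖ :=
              add_le_add_left (norm_add_le _ _) _
          _ ≤ ‖g‖ + ‖R‖ * ‖e + csE ιE ιG hE S hf n‖ + ‖tail n‖ :=
              add_le_add_left (add_le_add_right (R.le_opNorm _) _) _
          _ ≤ ‖g‖ + ‖R‖ * (‖e‖ + ‖csE ιE ιG hE S hf n‖) + ‖tail n‖ := by
              have := mul_le_mul_of_nonneg_left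
                (norm_add_le e (csE ιE ιG hE S hf n)) (norm_nonneg R)
              linarith
      have h6 : ‖csE ιE ιG hE S hf n‖ < ε := (hnorme n).trans hpow
      have h7 : ‖tail n‖ ≤ 4 * ‖R‖ * (1/2:ℝ)^n := htb n
      have h8 : ‖R‖ ≤ K := by rw [hK]; linarith
      have h9 : (0:ℝ) ≤ ‖R‖ := norm_nonneg R
      have h10 : (1/2:ℝ)^n < ε := hpow
      have h11 : (0:ℝ) < (1/2:ℝ)^n := by positivity
      have : ‖gt‖ < 6 * K * ε := by
        have : ‖g‖ + ‖R‖ * (‖e‖ + ‖csE ιE ιG hE S hf n‖) + ‖tail n‖ < 6 * K * ε := by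
          nlinarith [hgn, hen, h6, h7, h8, h9, h10, h11]
        linarith [h5]
      have h12 : 6 * K * ε = δ / 2 := by
        have hKne : K ≠ 0 := hK0.ne'
        rw [hε]; field_simp; ring
      linarith
  filter_upwards [hψ0] with b hb
  rw [hψ] at hb
  simp only [Pi.zero_apply] at hb
  exact sub_eq_zero.1 (norm_eq_zero.1 hb)
end Ext4

section Ext5
variable {α β E G : Type*} [MeasurableSpace α] [MeasurableSpace β]
  {μ : Measure α} {ν : Measure β}
  [NormedAddCommGroup E] [Lattice E] [HasSolidNorm E] [IsOrderedAddMonoid E] [NormedSpace ℝ E]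
  [NormedAddCommGroup G] [Lattice G] [HasSolidNorm G] [IsOrderedAddMonoid G] [NormedSpace ℝ G]
  {X : Type*} [NormedAddCommGroup X] [NormedSpace ℝ X]
  [CompleteSpace E] [CompleteSpace G] [CompleteSpace X]
  (ιE : E →ₗ[ℝ] (α →ₘ[μ] ℝ)) (ιG : G →ₗ[ℝ] (β →ₘ[ν] ℝ))

theorem self_approx (hE : IsBanachFunctionSpace μ E ιE) (hG : IsBanachFunctionSpace ν G ιG)
    (S R : E →L[ℝ] G) (hRpos : ∀ e : E, 0 ≤ e → 0 ≤ R e)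
    (hdom : ∀ e : E, |S e| ≤ R |e|) {f : α → X} (hf : InTensorClosure ιE f) :
    ∀ ε > (0:ℝ), ∃ (k : ℕ) (u : Fin k → E) (x : Fin k → X) (e : E) (g : G),
      (∀ᵐ a ∂μ, ‖f a - ∑ j, (ιE (u j)) a • x j‖ ≤ (ιE e) a) ∧ ‖e‖ < ε ∧
      (∀ᵐ b ∂ν, ‖SXfun ιE ιG hE S f b - ∑ j, (ιG (S (u j))) b • x j‖ ≤ (ιG g) b) ∧
      ‖g‖ < ε := by
  obtain ⟨hSXm, tail, htnn, htb, htail⟩ := base ιE ιG hE hG S R hRpos hdom hf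
  obtain ⟨hdata, hrep, hnorme, hnne⟩ := cs_spec ιE ιG hE S hf
  intro ε hε
  have hM : (0:ℝ) < ε / (4 * ‖R‖ + 1) := by positivity
  obtain ⟨n, hn⟩ := exists_pow_lt_of_lt_one hM (by norm_num : (1/2:ℝ) < 1)
  obtain ⟨kn, un, xn, hgen, hgen'⟩ := hdata n
  have hRn : (0:ℝ) ≤ ‖R‖ := norm_nonneg R
  have h1 : (1/2:ℝ)^n < ε := by
    have : ε / (4 * ‖R‖ + 1) ≤ ε := by
      rw [div_le_iff₀ (by positivity)]
      nlinarith
    linarith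
  refine ⟨kn, un, xn, csE ιE ιG hE S hf n, tail n, ?_, (hnorme n).trans h1, ?_, ?_⟩
  · filter_upwards [hrep n] with a ha
    have h2 : csG ιE ιG hE S hf n a = ∑ j, (ιE (un j)) a • xn j := by rw [hgen]
    rw [← h2]
    exact le_of_eq ha
  · filter_upwards [htail] with b hb
    have h2 : csG' ιE ιG hE S hf n b = ∑ j, (ιG (S (un j))) b • xn j := by rw [hgen']
    rw [← h2]
    exact hb.2 n
  · calc ‖tail n‖ ≤ 4 * ‖R‖ * (1/2:ℝ)^n := htb n
      _ ≤ (4 * ‖R‖ + 1) * (1/2:ℝ)^n := by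
          have : (0:ℝ) < (1/2:ℝ)^n := by positivity
          nlinarith
      _ < (4 * ‖R‖ + 1) * (ε / (4 * ‖R‖ + 1)) := by
          apply mul_lt_mul_of_pos_left hn (by positivity)
      _ = ε := by field_simp
end Ext5

section Ext6
variable {α β E G : Type*} [MeasurableSpace α] [MeasurableSpace β]
  {μ : Measure α} {ν : Measure β}
  [NormedAddCommGroup E] [Lattice E] [HasSolidNorm E] [IsOrderedAddMonoid E] [NormedSpace ℝ E]
  [NormedAddCommGroup G] [Lattice G] [HasSolidNorm G] [IsOrderedAddMonoid G] [NormedSpace ℝ G]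
  {X : Type*} [NormedAddCommGroup X] [NormedSpace ℝ X]
  [CompleteSpace E] [CompleteSpace G] [CompleteSpace X]
  (ιE : E →ₗ[ℝ] (α →ₘ[μ] ℝ)) (ιG : G →ₗ[ℝ] (β →ₘ[ν] ℝ))
  (hE : IsBanachFunctionSpace μ E ιE) (hG : IsBanachFunctionSpace ν G ιG)
  (S R : E →L[ℝ] G)

theorem coeFn_zero' (ι' : E →ₗ[ℝ] (α →ₘ[μ] ℝ)) : ⇑(ι' (0:E)) =ᵐ[μ] fun _ => (0:ℝ) :=
  map_zero ι' ▸ AEEqFun.coeFn_zero (β := ℝ) (μ := μ)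

theorem coeFn_add' (ι' : E →ₗ[ℝ] (α →ₘ[μ] ℝ)) (e₁ e₂ : E) :
    ⇑(ι' (e₁ + e₂)) =ᵐ[μ] fun a => (ι' e₁) a + (ι' e₂) a := by
  rw [map_add]
  filter_upwards [AEEqFun.coeFn_add (ι' e₁) (ι' e₂)] with a h
  simpa using h

theorem coeFn_smul' (ι' : E →ₗ[ℝ] (α →ₘ[μ] ℝ)) (c : ℝ) (e : E) :
    ⇑(ι' (c • e)) =ᵐ[μ] fun a => c * (ι' e) a := by
  rw [LinearMap.map_smul]
  filter_upwards [AEEqFun.coeFn_smul c (ι' e)] with a h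
  simpa [smul_eq_mul] using h

variable (hRpos : ∀ e : E, 0 ≤ e → 0 ≤ R e) (hdom : ∀ e : E, |S e| ≤ R |e|)

include hE hG hRpos hdom

theorem prop_wd {f g : α → X} (hf : InTensorClosure ιE f) (hg : InTensorClosure ιE g)
    (hfg : f =ᵐ[μ] g) :
    SXfun ιE ιG hE S f =ᵐ[ν] SXfun ιE ιG hE S g := by
  apply core ιE ιG hE hG S R hRpos hdom hg (base ιE ιG hE hG S R hRpos hdom hf).1
  intro ε hε
  obtain ⟨k, u, x, e, g0, h1, h2, h3, h4⟩ :=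
    self_approx ιE ιG hE hG S R hRpos hdom hf ε hε
  refine ⟨Fin k, inferInstance, u, x, e, g0, ?_, h2, h3, h4⟩
  filter_upwards [h1, hfg] with a ha hb
  rw [← hb]; exact ha

theorem prop_tensor_mem {n : ℕ} {u : Fin n → E} {x : Fin n → X} {f : α → X}
    (hf : f =ᵐ[μ] fun a => ∑ j, (ιE (u j)) a • x j) :
    InTensorClosure ιE f := by
  apply mem_closure_of_approx hE ((tensorAESM ιE u x).congr hf.symm)
  intro ε hε
  refine ⟨Fin n, inferInstance, u, x, 0, ?_, by simpa using hε⟩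
  filter_upwards [hf, coeFn_zero' ιE] with a h1 h2
  rw [h1, h2, sub_self, norm_zero]

theorem prop_ag {n : ℕ} {u : Fin n → E} {x : Fin n → X} {f : α → X}
    (hf : f =ᵐ[μ] fun a => ∑ j, (ιE (u j)) a • x j) :
    SXfun ιE ιG hE S f =ᵐ[ν] fun b => ∑ j, (ιG (S (u j))) b • x j := by
  refine (core ιE ιG hE hG S R hRpos hdom (prop_tensor_mem ιE ιG hE hG S R hRpos hdom hf)
    (tensorAESM ιG (fun j => S (u j)) x) ?_).symm
  intro ε hε
  refine ⟨Fin n, inferInstance, u, x, 0, 0, ?_, by simpa using hε, ?_, by simpa using hε⟩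
  · filter_upwards [hf, coeFn_zero' ιE] with a h1 h2
    rw [h1, h2, sub_self, norm_zero]
  · filter_upwards [coeFn_zero' ιG] with b h2
    rw [h2, sub_self, norm_zero]

theorem prop_cl {f : α → X} (hf : InTensorClosure ιE f) :
    InTensorClosure ιG (SXfun ιE ιG hE S f) := by
  apply mem_closure_of_approx hG (base ιE ιG hE hG S R hRpos hdom hf).1
  intro ε hε
  obtain ⟨k, u, x, e, g0, h1, h2, h3, h4⟩ :=
    self_approx ιE ιG hE hG S R hRpos hdom hf ε hε
  exact ⟨Fin k, inferInstance, fun j => S (u j), x, g0, h3, h4⟩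

theorem prop_mem_add {f g : α → X} (hf : InTensorClosure ιE f)
    (hg : InTensorClosure ιE g) : InTensorClosure ιE (f + g) := by
  apply mem_closure_of_approx hE (hf.1.add hg.1)
  intro ε hε
  obtain ⟨kf, uf, xf, ef, gf, hf1, hf2, _, _⟩ :=
    self_approx ιE ιG hE hG S R hRpos hdom hf (ε/2) (by positivity)
  obtain ⟨kg, ug, xg, eg, gg, hg1, hg2, _, _⟩ :=
    self_approx ιE ιG hE hG S R hRpos hdom hg (ε/2) (by positivity)
  refine ⟨Fin kf ⊕ Fin kg, inferInstance, Sum.elim uf ug, Sum.elim xf xg, ef + eg, ?_, ?_⟩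
  · have hsplit : ∀ a, ∑ j : Fin kf ⊕ Fin kg, (ιE (Sum.elim uf ug j)) a • Sum.elim xf xg j =
        (∑ j, (ιE (uf j)) a • xf j) + ∑ j, (ιE (ug j)) a • xg j := by
      intro a
      rw [Fintype.sum_sum_type]
      simp
    filter_upwards [hf1, hg1, coeFn_add' ιE ef eg] with a h1 h2 h3
    rw [hsplit a, h3]
    calc ‖(f + g) a - ((∑ j, (ιE (uf j)) a • xf j) + ∑ j, (ιE (ug j)) a • xg j)‖
        = ‖(f a - ∑ j, (ιE (uf j)) a • xf j) + (g a - ∑ j, (ιE (ug j)) a • xg j)‖ := by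
          congr 1
          simp only [Pi.add_apply]
          abel
      _ ≤ ‖f a - ∑ j, (ιE (uf j)) a • xf j‖ + ‖g a - ∑ j, (ιE (ug j)) a • xg j‖ :=
          norm_add_le _ _
      _ ≤ (ιE ef) a + (ιE eg) a := add_le_add h1 h2
  · calc ‖ef + eg‖ ≤ ‖ef‖ + ‖eg‖ := norm_add_le _ _
      _ < ε/2 + ε/2 := add_lt_add hf2 hg2
      _ = ε := by ring

theorem prop_add {f g : α → X} (hf : InTensorClosure ιE f)
    (hg : InTensorClosure ιE g) :
    SXfun ιE ιG hE S (f + g) =ᵐ[ν] SXfun ιE ιG hE S f + SXfun ιE ιG hE S g := by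
  refine (core ιE ιG hE hG S R hRpos hdom (prop_mem_add ιE ιG hE hG S R hRpos hdom hf hg)
    ((base ιE ιG hE hG S R hRpos hdom hf).1.add (base ιE ιG hE hG S R hRpos hdom hg).1)
    ?_).symm
  intro ε hε
  obtain ⟨kf, uf, xf, ef, gf, hf1, hf2, hf3, hf4⟩ :=
    self_approx ιE ιG hE hG S R hRpos hdom hf (ε/2) (by positivity)
  obtain ⟨kg, ug, xg, eg, gg, hg1, hg2, hg3, hg4⟩ :=
    self_approx ιE ιG hE hG S R hRpos hdom hg (ε/2) (by positivity)
  refine ⟨Fin kf ⊕ Fin kg, inferInstance, Sum.elim uf ug, Sum.elim xf xg,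
    ef + eg, gf + gg, ?_, ?_, ?_, ?_⟩
  · have hsplit : ∀ a, ∑ j : Fin kf ⊕ Fin kg, (ιE (Sum.elim uf ug j)) a • Sum.elim xf xg j =
        (∑ j, (ιE (uf j)) a • xf j) + ∑ j, (ιE (ug j)) a • xg j := by
      intro a
      rw [Fintype.sum_sum_type]
      simp
    filter_upwards [hf1, hg1, coeFn_add' ιE ef eg] with a h1 h2 h3
    rw [hsplit a, h3]
    calc ‖(f + g) a - ((∑ j, (ιE (uf j)) a • xf j) + ∑ j, (ιE (ug j)) a • xg j)‖
        = ‖(f a - ∑ j, (ιE (uf j)) a • xf j) + (g a - ∑ j, (ιE (ug j)) a • xg j)‖ := by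
          congr 1
          simp only [Pi.add_apply]
          abel
      _ ≤ ‖f a - ∑ j, (ιE (uf j)) a • xf j‖ + ‖g a - ∑ j, (ιE (ug j)) a • xg j‖ :=
          norm_add_le _ _
      _ ≤ (ιE ef) a + (ιE eg) a := add_le_add h1 h2
  · calc ‖ef + eg‖ ≤ ‖ef‖ + ‖eg‖ := norm_add_le _ _
      _ < ε/2 + ε/2 := add_lt_add hf2 hg2
      _ = ε := by ring
  · have hsplit : ∀ b, ∑ j : Fin kf ⊕ Fin kg,
        (ιG (S (Sum.elim uf ug j))) b • Sum.elim xf xg j =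
        (∑ j, (ιG (S (uf j))) b • xf j) + ∑ j, (ιG (S (ug j))) b • xg j := by
      intro b
      rw [Fintype.sum_sum_type]
      simp
    filter_upwards [hf3, hg3, coeFn_add' ιG gf gg] with b h1 h2 h3
    rw [hsplit b, h3]
    calc ‖(SXfun ιE ιG hE S f + SXfun ιE ιG hE S g) b -
          ((∑ j, (ιG (S (uf j))) b • xf j) + ∑ j, (ιG (S (ug j))) b • xg j)‖
        = ‖(SXfun ιE ιG hE S f b - ∑ j, (ιG (S (uf j))) b • xf j) +
           (SXfun ιE ιG hE S g b - ∑ j, (ιG (S (ug j))) b • xg j)‖ := by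
          congr 1
          simp only [Pi.add_apply]
          abel
      _ ≤ _ + _ := norm_add_le _ _
      _ ≤ (ιG gf) b + (ιG gg) b := add_le_add h1 h2
  · calc ‖gf + gg‖ ≤ ‖gf‖ + ‖gg‖ := norm_add_le _ _
      _ < ε/2 + ε/2 := add_lt_add hf4 hg4
      _ = ε := by ring

theorem prop_mem_smul (c : ℝ) {f : α → X} (hf : InTensorClosure ιE f) :
    InTensorClosure ιE (c • f) := by
  apply mem_closure_of_approx hE (hf.1.const_smul c)
  intro ε hε
  have hc1 : (0:ℝ) < ε / (|c| + 1) := by positivity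
  obtain ⟨k, u, x, e, g0, h1, h2, _, _⟩ :=
    self_approx ιE ιG hE hG S R hRpos hdom hf (ε / (|c| + 1)) hc1
  refine ⟨Fin k, inferInstance, u, fun j => c • x j, |c| • e, ?_, ?_⟩
  · have hsplit : ∀ a, ∑ j, (ιE (u j)) a • (c • x j) = c • ∑ j, (ιE (u j)) a • x j := by
      intro a
      rw [Finset.smul_sum]
      exact Finset.sum_congr rfl fun j _ => smul_comm _ _ _
    filter_upwards [h1, coeFn_smul' ιE |c| e] with a ha hb
    rw [hsplit a, hb]
    calc ‖(c • f) a - c • ∑ j, (ιE (u j)) a • x j‖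
        = |c| * ‖f a - ∑ j, (ιE (u j)) a • x j‖ := by
          rw [Pi.smul_apply, ← smul_sub, norm_smul, Real.norm_eq_abs]
      _ ≤ |c| * (ιE e) a := mul_le_mul_of_nonneg_left ha (abs_nonneg c)
  · rw [norm_smul, Real.norm_eq_abs, abs_abs]
    calc |c| * ‖e‖ ≤ |c| * (ε / (|c| + 1)) := mul_le_mul_of_nonneg_left h2.le (abs_nonneg c)
      _ < ε := by
          rw [mul_div_assoc']
          rw [div_lt_iff₀ (by positivity)]
          nlinarith [abs_nonneg c]

theorem prop_smul (c : ℝ) {f : α → X} (hf : InTensorClosure ιE f) :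
    SXfun ιE ιG hE S (c • f) =ᵐ[ν] c • SXfun ιE ιG hE S f := by
  refine (core ιE ιG hE hG S R hRpos hdom
    (prop_mem_smul ιE ιG hE hG S R hRpos hdom c hf)
    ((base ιE ιG hE hG S R hRpos hdom hf).1.const_smul c) ?_).symm
  intro ε hε
  have hc1 : (0:ℝ) < ε / (|c| + 1) := by positivity
  obtain ⟨k, u, x, e, g0, h1, h2, h3, h4⟩ :=
    self_approx ιE ιG hE hG S R hRpos hdom hf (ε / (|c| + 1)) hc1
  refine ⟨Fin k, inferInstance, u, fun j => c • x j, |c| • e, |c| • g0, ?_, ?_, ?_, ?_⟩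
  · have hsplit : ∀ a, ∑ j, (ιE (u j)) a • (c • x j) = c • ∑ j, (ιE (u j)) a • x j := by
      intro a
      rw [Finset.smul_sum]
      exact Finset.sum_congr rfl fun j _ => smul_comm _ _ _
    filter_upwards [h1, coeFn_smul' ιE |c| e] with a ha hb
    rw [hsplit a, hb]
    calc ‖(c • f) a - c • ∑ j, (ιE (u j)) a • x j‖
        = |c| * ‖f a - ∑ j, (ιE (u j)) a • x j‖ := by
          rw [Pi.smul_apply, ← smul_sub, norm_smul, Real.norm_eq_abs]
      _ ≤ |c| * (ιE e) a := mul_le_mul_of_nonneg_left ha (abs_nonneg c)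
  · rw [norm_smul, Real.norm_eq_abs, abs_abs]
    calc |c| * ‖e‖ ≤ |c| * (ε / (|c| + 1)) := mul_le_mul_of_nonneg_left h2.le (abs_nonneg c)
      _ < ε := by
          rw [mul_div_assoc', div_lt_iff₀ (by positivity)]
          nlinarith [abs_nonneg c]
  · have hsplit : ∀ b, ∑ j, (ιG (S (u j))) b • (c • x j) =
        c • ∑ j, (ιG (S (u j))) b • x j := by
      intro b
      rw [Finset.smul_sum]
      exact Finset.sum_congr rfl fun j _ => smul_comm _ _ _
    filter_upwards [h3, coeFn_smul' ιG |c| g0] with b hb hcb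
    rw [hsplit b, hcb]
    calc ‖(c • SXfun ιE ιG hE S f) b - c • ∑ j, (ιG (S (u j))) b • x j‖
        = |c| * ‖SXfun ιE ιG hE S f b - ∑ j, (ιG (S (u j))) b • x j‖ := by
          rw [Pi.smul_apply, ← smul_sub, norm_smul, Real.norm_eq_abs]
      _ ≤ |c| * (ιG g0) b := mul_le_mul_of_nonneg_left hb (abs_nonneg c)
  · rw [norm_smul, Real.norm_eq_abs, abs_abs]
    calc |c| * ‖g0‖ ≤ |c| * (ε / (|c| + 1)) := mul_le_mul_of_nonneg_left h4.le (abs_nonneg c)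
      _ < ε := by
          rw [mul_div_assoc', div_lt_iff₀ (by positivity)]
          nlinarith [abs_nonneg c]
end Ext6



section Ext

variable {α β E G : Type*} [MeasurableSpace α] [MeasurableSpace β]
  {μ : Measure α} {ν : Measure β}
  [NormedAddCommGroup E] [Lattice E] [HasSolidNorm E] [IsOrderedAddMonoid E] [NormedSpace ℝ E]
  [NormedAddCommGroup G] [Lattice G] [HasSolidNorm G] [IsOrderedAddMonoid G] [NormedSpace ℝ G]
  {X : Type*} [NormedAddCommGroup X] [NormedSpace ℝ X]

/-- `SX` is a (function-level realization of a) bounded linear operator, of norm at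
most `C`, from the closure of `E ⊗ X` in `E(X)` to the closure of `G ⊗ X` in `G(X)`,
extending the tensor extension `S ⊗ I_X`. -/
def IsTensorClosureExtension (ιE : E →ₗ[ℝ] (α →ₘ[μ] ℝ)) (ιG : G →ₗ[ℝ] (β →ₘ[ν] ℝ))
    (S : E →L[ℝ] G) (C : ℝ) (SX : (α → X) → (β → X)) : Prop :=
  -- well-defined on a.e.-equivalence classes
  (∀ f g : α → X, InTensorClosure ιE f → InTensorClosure ιE g → f =ᵐ[μ] g →
      SX f =ᵐ[ν] SX g) ∧
  -- maps the closure of `E ⊗ X` into the closure of `G ⊗ X`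
  (∀ f : α → X, InTensorClosure ιE f → InTensorClosure ιG (SX f)) ∧
  -- agrees with the tensor extension `S ⊗ I_X` on finite sums of elementary tensors
  (∀ (n : ℕ) (u : Fin n → E) (x : Fin n → X) (f : α → X),
      (f =ᵐ[μ] fun a => ∑ j : Fin n, (ιE (u j)) a • x j) →
      SX f =ᵐ[ν] fun b => ∑ j : Fin n, (ιG (S (u j))) b • x j) ∧
  -- linearity
  (∀ f g : α → X, InTensorClosure ιE f → InTensorClosure ιE g →
      SX (f + g) =ᵐ[ν] SX f + SX g) ∧
  (∀ (c : ℝ) (f : α → X), InTensorClosure ιE f → SX (c • f) =ᵐ[ν] c • SX f) ∧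
  -- boundedness with constant `C`
  (∀ (f : α → X) (e : E) (g : G), InTensorClosure ιE f →
      MemKB ιE f e → MemKB ιG (SX f) g → ‖g‖ ≤ C * ‖e‖)


end Ext

section Ext7
variable {α β E G : Type*} [MeasurableSpace α] [MeasurableSpace β]
  {μ : Measure α} {ν : Measure β}
  [NormedAddCommGroup E] [Lattice E] [HasSolidNorm E] [IsOrderedAddMonoid E] [NormedSpace ℝ E]
  [NormedAddCommGroup G] [Lattice G] [HasSolidNorm G] [IsOrderedAddMonoid G] [NormedSpace ℝ G]
  {X : Type*} [NormedAddCommGroup X] [NormedSpace ℝ X]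
  [CompleteSpace E] [CompleteSpace G] [CompleteSpace X]
  (ιE : E →ₗ[ℝ] (α →ₘ[μ] ℝ)) (ιG : G →ₗ[ℝ] (β →ₘ[ν] ℝ))
  (hE : IsBanachFunctionSpace μ E ιE) (hG : IsBanachFunctionSpace ν G ιG)
  (S R : E →L[ℝ] G)
  (hRpos : ∀ e : E, 0 ≤ e → 0 ≤ R e) (hdom : ∀ e : E, |S e| ≤ R |e|)

include hE hG hRpos hdom

theorem prop_bd {f : α → X} {e : E} {g : G} (hf : InTensorClosure ιE f)
    (hKf : MemKB ιE f e) (hKS : MemKB ιG (SXfun ιE ιG hE S f) g) :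
    ‖g‖ ≤ ‖R‖ * ‖e‖ := by
  obtain ⟨hSXm, tail, htnn, htb, htail⟩ := base ιE ιG hE hG S R hRpos hdom hf
  obtain ⟨hdata, hrep, hnorme, hnne⟩ := cs_spec ιE ιG hE S hf
  have hg0 : 0 ≤ g := by
    apply bfs_nonneg_of_ae hG
    filter_upwards [hKS.2] with b hb
    rw [← hb]; positivity
  have key : ∀ n : ℕ, ‖g‖ ≤ ‖R‖ * ‖e‖ + 5 * ‖R‖ * (1/2:ℝ)^n := by
    intro n
    obtain ⟨kn, un, xn, hgen, hgen'⟩ := hdata n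
    -- keyDom for the plain tensor sum at level n
    have hmid := keyDom hE hG S R hRpos hdom un xn (e := e + csE ιE ιG hE S hf n) ?_
    swap
    · filter_upwards [hKf.2, hrep n, coeFn_add' ιE e (csE ιE ιG hE S hf n)] with a h1 h2 h3
      have h4 : csG ιE ιG hE S hf n a = ∑ j, (ιE (un j)) a • xn j := by rw [hgen]
      rw [← h4, h3]
      calc ‖csG ιE ιG hE S hf n a‖
          ≤ ‖f a‖ + ‖f a - csG ιE ιG hE S hf n a‖ := by
            have := norm_add_le (f a) (csG ιE ιG hE S hf n a - f a)
            simp only [add_sub_cancel] at this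
            calc ‖csG ιE ιG hE S hf n a‖ = ‖f a + (csG ιE ιG hE S hf n a - f a)‖ := by
                  congr 1; abel
              _ ≤ ‖f a‖ + ‖csG ιE ιG hE S hf n a - f a‖ := norm_add_le _ _
              _ = ‖f a‖ + ‖f a - csG ιE ιG hE S hf n a‖ := by rw [norm_sub_rev]
        _ = (ιE e) a + (ιE (csE ιE ιG hE S hf n)) a := by rw [h1, h2]
    -- g ≤ tail n + R (e + csE n)
    set Bn : G := tail n + R (e + csE ιE ιG hE S hf n) with hBn
    have hgB : g ≤ Bn := by
      apply bfs_le_of_ae hG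
      filter_upwards [hKS.2, htail, hmid, coeFn_add' ιG (tail n)
        (R (e + csE ιE ιG hE S hf n))] with b h1 h2 h3 h4
      rw [← h1, h4]
      have h5 : csG' ιE ιG hE S hf n b = ∑ j, (ιG (S (un j))) b • xn j := by rw [hgen']
      calc ‖SXfun ιE ιG hE S f b‖
          ≤ ‖SXfun ιE ιG hE S f b - csG' ιE ιG hE S hf n b‖ +
            ‖csG' ιE ιG hE S hf n b‖ := by
            calc ‖SXfun ιE ιG hE S f b‖
                = ‖(SXfun ιE ιG hE S f b - csG' ιE ιG hE S hf n b) +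
                   csG' ιE ιG hE S hf n b‖ := by congr 1; abel
              _ ≤ _ := norm_add_le _ _
        _ ≤ (ιG (tail n)) b + (ιG (R (e + csE ιE ιG hE S hf n))) b := by
            apply add_le_add (h2.2 n)
            rw [h5]; exact h3
    have hnorm : ‖g‖ ≤ ‖Bn‖ := by
      apply bfs_norm_le
      rw [abs_of_nonneg hg0]
      exact hgB
    have hBnorm : ‖Bn‖ ≤ 4 * ‖R‖ * (1/2:ℝ)^n + ‖R‖ * (‖e‖ + (1/2:ℝ)^n) := by
      calc ‖Bn‖ ≤ ‖tail n‖ + ‖R (e + csE ιE ιG hE S hf n)‖ := norm_add_le _ _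
        _ ≤ 4 * ‖R‖ * (1/2:ℝ)^n + ‖R‖ * ‖e + csE ιE ιG hE S hf n‖ :=
            add_le_add (htb n) (R.le_opNorm _)
        _ ≤ 4 * ‖R‖ * (1/2:ℝ)^n + ‖R‖ * (‖e‖ + (1/2:ℝ)^n) := by
            have h6 : ‖e + csE ιE ιG hE S hf n‖ ≤ ‖e‖ + (1/2:ℝ)^n :=
              (norm_add_le _ _).trans (add_le_add_right (hnorme n).le _)
            exact add_le_add_right (mul_le_mul_of_nonneg_left h6 (norm_nonneg R)) _
    calc ‖g‖ ≤ ‖Bn‖ := hnorm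
      _ ≤ 4 * ‖R‖ * (1/2:ℝ)^n + ‖R‖ * (‖e‖ + (1/2:ℝ)^n) := hBnorm
      _ = ‖R‖ * ‖e‖ + 5 * ‖R‖ * (1/2:ℝ)^n := by ring
  have hlim : Filter.Tendsto (fun n : ℕ => ‖R‖ * ‖e‖ + 5 * ‖R‖ * (1/2:ℝ)^n)
      Filter.atTop (nhds (‖R‖ * ‖e‖)) := by
    have h0 : Filter.Tendsto (fun n : ℕ => (1/2:ℝ)^n) Filter.atTop (nhds 0) :=
      tendsto_pow_atTop_nhds_zero_of_lt_one (by norm_num) (by norm_num)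
    have := (h0.const_mul (5 * ‖R‖)).const_add (‖R‖ * ‖e‖)
    simpa [mul_comm, mul_assoc] using this
  exact ge_of_tendsto hlim (Filter.Eventually.of_forall key)

theorem prop_uniq (C' : ℝ) (SX' : (α → X) → (β → X))
    (hX' : IsTensorClosureExtension (X := X) ιE ιG S C' SX')
    {f : α → X} (hf : InTensorClosure ιE f) :
    SX' f =ᵐ[ν] SXfun ιE ιG hE S f := by
  obtain ⟨hwd, hcl, hag, hadd, hsm, hbd⟩ := hX'
  obtain ⟨hdata, hrep, hnorme, hnne⟩ := cs_spec ιE ιG hE S hf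
  apply core ιE ιG hE hG S R hRpos hdom hf (hcl f hf).1
  intro ε hε
  have hC : (0:ℝ) < ε / (|C'| + 1) := by positivity
  obtain ⟨n, hn⟩ := exists_pow_lt_of_lt_one hC (by norm_num : (1/2:ℝ) < 1)
  have hpow_ε : (1/2:ℝ)^n < ε := by
    have : ε / (|C'| + 1) ≤ ε := by
      rw [div_le_iff₀ (by positivity)]
      nlinarith [abs_nonneg C', hε]
    linarith
  obtain ⟨kn, un, xn, hgen, hgen'⟩ := hdata n
  set t : α → X := csG ιE ιG hE S hf n with ht
  set r : α → X := f - t with hr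
  -- t is in the closure
  have htc : InTensorClosure ιE t :=
    prop_tensor_mem ιE ιG hE hG S R hRpos hdom (u := un) (x := xn)
      (Filter.Eventually.of_forall fun a => congrFun hgen a)
  -- r is in the closure
  have hrc : InTensorClosure ιE r := by
    apply mem_closure_of_approx hE (hf.1.sub htc.1)
    intro ε' hε'
    obtain ⟨m, hm⟩ := exists_pow_lt_of_lt_one hε' (by norm_num : (1/2:ℝ) < 1)
    obtain ⟨km, um, xm, hgem, hgem'⟩ := hdata m
    refine ⟨Fin km ⊕ Fin kn, inferInstance, Sum.elim um un,
      Sum.elim xm (fun j => - xn j), csE ιE ιG hE S hf m, ?_, (hnorme m).trans hm⟩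
    have hsplit : ∀ a, ∑ j : Fin km ⊕ Fin kn,
        (ιE (Sum.elim um un j)) a • Sum.elim xm (fun j => - xn j) j =
        csG ιE ιG hE S hf m a - t a := by
      intro a
      have e1 : csG ιE ιG hE S hf m a = ∑ j, (ιE (um j)) a • xm j := congrFun hgem a
      have e2 : t a = ∑ j : Fin kn, (ιE (un j)) a • xn j := congrFun hgen a
      rw [Fintype.sum_sum_type]
      simp only [Sum.elim_inl, Sum.elim_inr, smul_neg, Finset.sum_neg_distrib]
      rw [e1, e2, sub_eq_add_neg]
    filter_upwards [hrep m] with a ha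
    rw [hsplit a]
    have : r a - (csG ιE ιG hE S hf m a - t a) = f a - csG ιE ιG hE S hf m a := by
      rw [hr]; simp only [Pi.sub_apply]; abel
    rw [this, ha]
  -- f = t + r
  have hftr : f = t + r := by
    funext a
    simp only [hr, Pi.add_apply, Pi.sub_apply]
    abel
  have hlin : SX' f =ᵐ[ν] SX' t + SX' r := by
    rw [hftr]
    exact hadd t r htc hrc
  have hagr : SX' t =ᵐ[ν] fun b => ∑ j, (ιG (S (un j))) b • xn j :=
    hag kn un xn t (Filter.Eventually.of_forall fun a => congrFun hgen a)
  -- bound on SX' r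
  obtain ⟨gr, hgr, _⟩ := memKB_of_closure hG (hcl r hrc)
  have hKBr : MemKB ιE r (csE ιE ιG hE S hf n) := by
    refine ⟨hf.1.sub htc.1, ?_⟩
    filter_upwards [hrep n] with a ha
    rw [hr]
    simpa using ha
  have hgrn : ‖gr‖ < ε := by
    have h1 := hbd r (csE ιE ιG hE S hf n) gr hrc hKBr hgr
    calc ‖gr‖ ≤ C' * ‖csE ιE ιG hE S hf n‖ := h1
      _ ≤ |C'| * ‖csE ιE ιG hE S hf n‖ :=
          mul_le_mul_of_nonneg_right (le_abs_self C') (norm_nonneg _)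
      _ ≤ |C'| * (1/2:ℝ)^n := by
          apply mul_le_mul_of_nonneg_left (hnorme n).le (abs_nonneg C')
      _ ≤ (|C'| + 1) * (1/2:ℝ)^n := by
          have : (0:ℝ) < (1/2:ℝ)^n := by positivity
          nlinarith [abs_nonneg C']
      _ < (|C'| + 1) * (ε / (|C'| + 1)) := by
          apply mul_lt_mul_of_pos_left hn (by positivity)
      _ = ε := by field_simp
  refine ⟨Fin kn, inferInstance, un, xn, csE ιE ιG hE S hf n, gr, ?_,
    (hnorme n).trans hpow_ε, ?_, hgrn⟩
  · filter_upwards [hrep n] with a ha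
    have h2 : t a = ∑ j, (ιE (un j)) a • xn j := congrFun hgen a
    rw [← h2]
    exact le_of_eq ha
  · filter_upwards [hlin, hagr, hgr.2] with b h1 h2 h3
    rw [h1]
    simp only [Pi.add_apply]
    rw [h2]
    have : (fun b => ∑ j, (ιG (S (un j))) b • xn j) b + SX' r b -
        ∑ j, (ιG (S (un j))) b • xn j = SX' r b := by simp
    rw [this, ← h3]
end Ext7

section Ext

variable {α β E G : Type*} [MeasurableSpace α] [MeasurableSpace β]
  {μ : Measure α} {ν : Measure β}
  [NormedAddCommGroup E] [Lattice E] [HasSolidNorm E] [IsOrderedAddMonoid E] [NormedSpace ℝ E]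
  [NormedAddCommGroup G] [Lattice G] [HasSolidNorm G] [IsOrderedAddMonoid G] [NormedSpace ℝ G]
  {X : Type*} [NormedAddCommGroup X] [NormedSpace ℝ X]

/-- **Bounded extension of the tensor extension of a dominated operator.**
If `S : E → G` is dominated by a positive operator `R`, then `S ⊗ I_X` extends
uniquely to a bounded linear operator, of norm at most `‖R‖`, from the closure of
`E ⊗ X` in `E(X)` to the closure of `G ⊗ X` in `G(X)`. -/
theorem tensor_extension_of_dominated
    [CompleteSpace E] [CompleteSpace G] [CompleteSpace X]
    (ιE : E →ₗ[ℝ] (α →ₘ[μ] ℝ)) (ιG : G →ₗ[ℝ] (β →ₘ[ν] ℝ))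
    (hE : IsBanachFunctionSpace μ E ιE) (hG : IsBanachFunctionSpace ν G ιG)
    (S : E →L[ℝ] G) (R : E →L[ℝ] G)
    (hRpos : ∀ e : E, 0 ≤ e → 0 ≤ R e)
    (hdom : ∀ e : E, |S e| ≤ R |e|) :
    ∃ SX : (α → X) → (β → X),
      IsTensorClosureExtension (X := X) ιE ιG S ‖R‖ SX ∧
      ∀ (C' : ℝ) (SX' : (α → X) → (β → X)),
        IsTensorClosureExtension (X := X) ιE ιG S C' SX' →
        ∀ f : α → X, InTensorClosure ιE f → SX' f =ᵐ[ν] SX f := by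
  refine ⟨SXfun ιE ιG hE S, ⟨?_, ?_, ?_, ?_, ?_, ?_⟩, ?_⟩
  · exact fun f g hf hg hfg => prop_wd ιE ιG hE hG S R hRpos hdom hf hg hfg
  · exact fun f hf => prop_cl ιE ιG hE hG S R hRpos hdom hf
  · exact fun n u x f hf => prop_ag ιE ιG hE hG S R hRpos hdom hf
  · exact fun f g hf hg => prop_add ιE ιG hE hG S R hRpos hdom hf hg
  · exact fun c f hf => prop_smul ιE ιG hE hG S R hRpos hdom c hf
  · exact fun f e g hf hKf hKS => prop_bd ιE ιG hE hG S R hRpos hdom hf hKf hKS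
  · exact fun C' SX' hX' f hf => prop_uniq ιE ιG hE hG S R hRpos hdom C' SX' hX' hf

end Ext
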